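/- arXiv:2103.02871 — 4 statements merged into one kernel-verified Lean document; each statement's English description precedes it below -/
import Mathlib

section
/- Let V be a finite-dimensional symplectic vector space over ℚ (nondegenerate alternating form), and let I, I' be two maximal isotropic subspaces. Then there exists a maximal isotropic subspace I'' of V with I'' ∩ I = 0 and I'' ∩ I' = 0. -/
open Module

section Aux

variable {V : Type*} [AddCommGroup V] [Module ℚ V] [FiniteDimensional ℚ V]

/-- Any submodule of a submodule has a complement within it. -/
lemma aux_exists_compl_le (K I : Submodule ℚ V) (h : K ≤ I) :
    ∃ A : Submodule ℚ V, A ≤ I ∧ A ⊓ K = ⊥ ∧ A ⊔ K = I := by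
  obtain ⟨A₀, hA₀⟩ := Submodule.exists_isCompl (K.comap I.subtype)
  have hKmap : (K.comap I.subtype).map I.subtype = K := by
    rw [Submodule.map_comap_subtype, inf_eq_right.mpr h]
  refine ⟨A₀.map I.subtype, Submodule.map_subtype_le _ _, ?_, ?_⟩
  · rw [← hKmap, ← Submodule.map_inf _ (Submodule.injective_subtype I),
      hA₀.symm.inf_eq_bot, Submodule.map_bot]
  · rw [← hKmap, ← Submodule.map_sup, hA₀.symm.sup_eq_top, Submodule.map_top,
      Submodule.range_subtype]

/-- A symmetric "positive definite" pairing into the dual, on any f.d. ℚ-space. -/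
lemma aux_exists_selfdual (W : Type*) [AddCommGroup W] [Module ℚ W] [FiniteDimensional ℚ W] :
    ∃ σ : W →ₗ[ℚ] Module.Dual ℚ W, (∀ x y, σ x y = σ y x) ∧ Function.Injective σ := by
  classical
  let b := finBasis ℚ W
  have key : ∀ x y : W, b.toDual x y = ∑ i, b.repr y i * b.repr x i := by
    intro x y
    conv_lhs => rw [← b.sum_repr y]
    rw [map_sum]
    simp [Basis.toDual_eq_repr, smul_eq_mul]
  refine ⟨b.toDual, fun x y => ?_, ?_⟩
  · rw [key x y, key y x]
    exact Finset.sum_congr rfl fun i _ => mul_comm _ _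
  · have : (b.toDual : W → Module.Dual ℚ W) = b.toDualEquiv := by
      funext m; exact (b.toDualEquiv_apply m).symm
    rw [this]
    exact b.toDualEquiv.injective

/-- Given two isotropic subspaces in "perfect pairing" position, the graph of a symmetric
isomorphism is isotropic and transverse to both. -/
lemma aux_exists_graph (Bf : V →ₗ[ℚ] V →ₗ[ℚ] ℚ) (halt : Bf.IsAlt)
    (A B' : Submodule ℚ V)
    (hA : ∀ x ∈ A, ∀ y ∈ A, Bf x y = 0) (hB : ∀ x ∈ B', ∀ y ∈ B', Bf x y = 0)
    (hAB : A ⊓ B' = ⊥)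
    (sepR : ∀ b ∈ B', (∀ a ∈ A, Bf a b = 0) → b = 0)
    (hdim : finrank ℚ A = finrank ℚ B') :
    ∃ C : Submodule ℚ V, C ≤ A ⊔ B' ∧ (∀ x ∈ C, ∀ y ∈ C, Bf x y = 0) ∧
      finrank ℚ C = finrank ℚ A ∧ C ⊓ A = ⊥ ∧ C ⊓ B' = ⊥ := by
  classical
  let Ψ : ↥B' →ₗ[ℚ] Module.Dual ℚ ↥A := (Bf.domRestrict₁₂ A B').flip
  have hΨapply : ∀ (b : ↥B') (a : ↥A), Ψ b a = Bf a b := fun b a => rfl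
  have hΨinj : Function.Injective Ψ := by
    rw [← LinearMap.ker_eq_bot, LinearMap.ker_eq_bot']
    intro b hb
    have hz : ∀ a ∈ A, Bf a (b : V) = 0 := by
      intro a ha
      have := congrFun (congrArg DFunLike.coe hb) ⟨a, ha⟩
      simpa [hΨapply] using this
    exact Subtype.ext (sepR _ b.2 hz)
  have hΨsurj : Function.Surjective Ψ := by
    refine (LinearMap.injective_iff_surjective_of_finrank_eq_finrank ?_).mp hΨinj
    rw [Subspace.dual_finrank_eq, hdim]
  let e := LinearEquiv.ofBijective Ψ ⟨hΨinj, hΨsurj⟩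
  obtain ⟨σ, hσsymm, hσinj⟩ := aux_exists_selfdual ↥A
  let φ : ↥A →ₗ[ℚ] ↥B' := e.symm.toLinearMap ∘ₗ σ
  have hφ : ∀ a a' : ↥A, Bf a' (φ a : V) = σ a a' := by
    intro a a'
    have h1 : Ψ (φ a) = σ a := e.apply_symm_apply (σ a)
    have := congrFun (congrArg DFunLike.coe h1) a'
    simpa [hΨapply] using this
  have hφinj : Function.Injective φ := fun x y h => hσinj (e.symm.injective h)
  let θ : ↥A →ₗ[ℚ] V := A.subtype + B'.subtype ∘ₗ φ
  have hθ : ∀ a : ↥A, θ a = (a : V) + (φ a : V) := fun a => rfl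
  have hθinj : Function.Injective θ := by
    rw [← LinearMap.ker_eq_bot, LinearMap.ker_eq_bot']
    intro a ha
    rw [hθ] at ha
    have h1 : (a : V) = -(φ a : V) := eq_neg_of_add_eq_zero_left ha
    have h2 : (a : V) ∈ A ⊓ B' := ⟨a.2, by rw [h1]; exact neg_mem (φ a).2⟩
    rw [hAB, Submodule.mem_bot] at h2
    exact Subtype.ext h2
  refine ⟨LinearMap.range θ, ?_, ?_, ?_, ?_, ?_⟩
  · rintro x ⟨a, rfl⟩
    rw [hθ]
    exact add_mem (Submodule.mem_sup_left a.2) (Submodule.mem_sup_right (φ a).2)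
  · rintro x ⟨a, rfl⟩ y ⟨a', rfl⟩
    rw [hθ, hθ]
    have t1 : Bf a a' = 0 := hA _ a.2 _ a'.2
    have t4 : Bf (φ a : V) (φ a' : V) = 0 := hB _ (φ a).2 _ (φ a').2
    have t2 : Bf (a : V) (φ a' : V) = σ a' a := hφ a' a
    have t3 : Bf (φ a : V) (a' : V) = -σ a a' := by
      have := halt.neg ((φ a : V)) (a' : V)
      rw [hφ a a'] at this
      linarith
    have hsym := hσsymm a a'
    simp only [map_add, LinearMap.add_apply]
    rw [t1, t2, t3, t4]
    linarith
  · exact LinearMap.finrank_range_of_inj hθinj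
  · rw [eq_bot_iff]
    rintro x ⟨hx, hxA⟩
    obtain ⟨a, rfl⟩ := hx
    have h1 : (φ a : V) ∈ A ⊓ B' := by
      refine ⟨?_, (φ a).2⟩
      have : (φ a : V) = θ a - (a : V) := by rw [hθ]; abel
      rw [this]
      exact sub_mem hxA a.2
    rw [hAB, Submodule.mem_bot] at h1
    have h2 : φ a = 0 := Subtype.ext h1
    have h3 : a = 0 := hφinj (by rw [h2, map_zero])
    simp [h3, Submodule.mem_bot]
  · rw [eq_bot_iff]
    rintro x ⟨hx, hxB⟩
    obtain ⟨a, rfl⟩ := hx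
    have h1 : (a : V) ∈ A ⊓ B' := by
      refine ⟨a.2, ?_⟩
      have : (a : V) = θ a - (φ a : V) := by rw [hθ]; abel
      rw [this]
      exact sub_mem hxB (φ a).2
    rw [hAB, Submodule.mem_bot] at h1
    have h3 : a = 0 := Subtype.ext h1
    simp [h3, Submodule.mem_bot]

/-- Any Lagrangian of a symplectic subspace has an isotropic complement in it. -/
lemma aux_exists_lag_compl (Bf : V →ₗ[ℚ] V →ₗ[ℚ] ℚ) (halt : Bf.IsAlt)
    (W K : Submodule ℚ V) (hKW : K ≤ W)
    (hK : ∀ x ∈ K, ∀ y ∈ K, Bf x y = 0)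
    (sep : ∀ x ∈ W, (∀ y ∈ W, Bf x y = 0) → x = 0)
    (hdim : finrank ℚ W = 2 * finrank ℚ K) :
    ∃ K' : Submodule ℚ V, K' ≤ W ∧ (∀ x ∈ K', ∀ y ∈ K', Bf x y = 0) ∧
      finrank ℚ K' = finrank ℚ K ∧ K' ⊓ K = ⊥ := by
  classical
  obtain ⟨C, hCW, hCK, hCKsup⟩ := aux_exists_compl_le K W hKW
  have hdimC : finrank ℚ C = finrank ℚ K := by
    have h := Submodule.finrank_sup_add_finrank_inf_eq C K
    rw [hCKsup, hCK, finrank_bot] at h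
    omega
  let Ψ : ↥K →ₗ[ℚ] Module.Dual ℚ ↥C := Bf.domRestrict₁₂ K C
  have hΨapply : ∀ (k : ↥K) (c : ↥C), Ψ k c = Bf k c := fun k c => rfl
  have hΨinj : Function.Injective Ψ := by
    rw [← LinearMap.ker_eq_bot, LinearMap.ker_eq_bot']
    intro k hk
    have hzC : ∀ c ∈ C, Bf (k : V) c = 0 := by
      intro c hc
      have := congrFun (congrArg DFunLike.coe hk) ⟨c, hc⟩
      simpa [hΨapply] using this
    have hzW : ∀ y ∈ W, Bf (k : V) y = 0 := by
      intro y hy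
      rw [← hCKsup] at hy
      obtain ⟨c, hc, κ, hκ, rfl⟩ := Submodule.mem_sup.mp hy
      rw [map_add]
      rw [hzC c hc, hK _ k.2 _ hκ, add_zero]
    exact Subtype.ext (sep _ (hKW k.2) hzW)
  have hΨsurj : Function.Surjective Ψ := by
    refine (LinearMap.injective_iff_surjective_of_finrank_eq_finrank ?_).mp hΨinj
    rw [Subspace.dual_finrank_eq, hdimC]
  let e := LinearEquiv.ofBijective Ψ ⟨hΨinj, hΨsurj⟩
  let ρ : ↥C →ₗ[ℚ] Module.Dual ℚ ↥C := (2 : ℚ)⁻¹ • Bf.domRestrict₁₂ C C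
  let Am : ↥C →ₗ[ℚ] ↥K := e.symm.toLinearMap ∘ₗ ρ
  have hAm : ∀ c c' : ↥C, Bf (Am c : V) (c' : V) = 2⁻¹ * Bf (c : V) (c' : V) := by
    intro c c'
    have h1 : Ψ (Am c) = ρ c := e.apply_symm_apply (ρ c)
    have := congrFun (congrArg DFunLike.coe h1) c'
    simpa [hΨapply, ρ, LinearMap.smul_apply, smul_eq_mul, LinearMap.domRestrict₁₂_apply] using this
  let θ : ↥C →ₗ[ℚ] V := C.subtype - K.subtype ∘ₗ Am
  have hθ : ∀ c : ↥C, θ c = (c : V) - (Am c : V) := fun c => rfl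
  have hθinj : Function.Injective θ := by
    rw [← LinearMap.ker_eq_bot, LinearMap.ker_eq_bot']
    intro c hc
    rw [hθ, sub_eq_zero] at hc
    have h2 : (c : V) ∈ C ⊓ K := ⟨c.2, by rw [hc]; exact (Am c).2⟩
    rw [hCK, Submodule.mem_bot] at h2
    exact Subtype.ext h2
  refine ⟨LinearMap.range θ, ?_, ?_, ?_, ?_⟩
  · rintro x ⟨c, rfl⟩
    rw [hθ]
    exact sub_mem (hCW c.2) (hKW (Am c).2)
  · rintro x ⟨c, rfl⟩ y ⟨c', rfl⟩
    rw [hθ, hθ]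
    have t1 : Bf (Am c : V) (Am c' : V) = 0 := hK _ (Am c).2 _ (Am c').2
    have t2 : Bf (Am c : V) (c' : V) = 2⁻¹ * Bf (c : V) (c' : V) := hAm c c'
    have t3 : Bf (c : V) (Am c' : V) = 2⁻¹ * Bf (c : V) (c' : V) := by
      have h1 := halt.neg ((Am c' : V)) (c : V)
      have h2 := hAm c' c
      have h3 := halt.neg ((c : V)) (c' : V)
      linarith
    simp only [map_sub, LinearMap.sub_apply]
    rw [t1, t2, t3]
    ring
  · rw [← hdimC]
    exact LinearMap.finrank_range_of_inj hθinj
  · rw [eq_bot_iff]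
    rintro x ⟨hx, hxK⟩
    obtain ⟨c, rfl⟩ := hx
    have h1 : (c : V) ∈ C ⊓ K := by
      refine ⟨c.2, ?_⟩
      have : (c : V) = θ c + (Am c : V) := by rw [hθ]; abel
      rw [this]
      exact add_mem hxK (Am c).2
    rw [hCK, Submodule.mem_bot] at h1
    have h3 : c = 0 := Subtype.ext h1
    simp [h3, Submodule.mem_bot]

end Aux

/-- Given two Lagrangians `I, I'` of a symplectic `ℚ`-vector space, there is a
third Lagrangian `I''` transverse to both. -/
theorem exists_lagrangian_transverse_to_two
    (V : Type*) [AddCommGroup V] [Module ℚ V] [FiniteDimensional ℚ V] (g : ℕ)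
    (B : V →ₗ[ℚ] V →ₗ[ℚ] ℚ) (halt : B.IsAlt) (hnd : B.Nondegenerate)
    (hdim : finrank ℚ V = 2 * g)
    (I I' : Submodule ℚ V)
    (hI : ∀ x ∈ I, ∀ y ∈ I, B x y = 0) (hI' : ∀ x ∈ I', ∀ y ∈ I', B x y = 0)
    (hIdim : finrank ℚ I = g) (hI'dim : finrank ℚ I' = g) :
    ∃ I'' : Submodule ℚ V,
      (∀ x ∈ I'', ∀ y ∈ I'', B x y = 0) ∧
      finrank ℚ I'' = g ∧ I'' ⊓ I = ⊥ ∧ I'' ⊓ I' = ⊥ := by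
  classical
  have href : B.IsRefl := halt.isRefl
  have hndB : LinearMap.BilinForm.Nondegenerate B := hnd
  -- Lagrangians are self-orthogonal
  have lagClosed : ∀ L : Submodule ℚ V, finrank ℚ L = g →
      (∀ x ∈ L, ∀ y ∈ L, B x y = 0) → ∀ x : V, (∀ y ∈ L, B x y = 0) → x ∈ L := by
    intro L hLd hLiso x hx
    have hle : L ≤ LinearMap.BilinForm.orthogonal B L := by
      intro y hy
      rw [LinearMap.BilinForm.mem_orthogonal_iff]
      intro n hn
      exact hLiso n hn y hy
    have hfr : finrank ℚ (LinearMap.BilinForm.orthogonal B L) ≤ finrank ℚ L := by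
      rw [LinearMap.BilinForm.finrank_orthogonal (B := B) hndB L, hdim, hLd]
      omega
    have heq := Submodule.eq_of_le_of_finrank_le hle hfr
    rw [heq, LinearMap.BilinForm.mem_orthogonal_iff]
    intro n hn
    have h1 := halt.neg x n
    have h2 := hx n hn
    linarith
  set K := I ⊓ I' with hKdef
  have hKI : K ≤ I := inf_le_left
  have hKI' : K ≤ I' := inf_le_right
  obtain ⟨A, hAI, hAK, hAKsup⟩ := aux_exists_compl_le K I hKI
  obtain ⟨B', hBI', hBK, hBKsup⟩ := aux_exists_compl_le K I' hKI'
  have hAdim : finrank ℚ A + finrank ℚ K = g := by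
    have h := Submodule.finrank_sup_add_finrank_inf_eq A K
    rw [hAKsup, hAK, finrank_bot, hIdim] at h
    omega
  have hBdim : finrank ℚ B' + finrank ℚ K = g := by
    have h := Submodule.finrank_sup_add_finrank_inf_eq B' K
    rw [hBKsup, hBK, finrank_bot, hI'dim] at h
    omega
  have hABbot : A ⊓ B' = ⊥ := by
    rw [eq_bot_iff]
    rintro x ⟨hxA, hxB⟩
    have h1 : x ∈ A ⊓ K := ⟨hxA, ⟨hAI hxA, hBI' hxB⟩⟩
    rw [hAK] at h1
    exact h1
  -- right separation for the pairing A × B'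
  have sepR : ∀ b ∈ B', (∀ a ∈ A, B a b = 0) → b = 0 := by
    intro b hb hball
    have hbI : b ∈ I := by
      refine lagClosed I hIdim hI b ?_
      intro y hy
      rw [← hAKsup] at hy
      obtain ⟨a, ha, κ, hκ, rfl⟩ := Submodule.mem_sup.mp hy
      rw [map_add]
      have h1 : B b a = 0 := by
        have := halt.neg a b
        have := hball a ha
        linarith
      have h2 : B b κ = 0 := hI' b (hBI' hb) κ (hKI' hκ)
      rw [h1, h2, add_zero]
    have h1 : b ∈ B' ⊓ K := ⟨hb, ⟨hbI, hBI' hb⟩⟩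
    rw [hBK] at h1
    exact h1
  -- left separation for the pairing A × B'
  have sepL : ∀ a ∈ A, (∀ b ∈ B', B a b = 0) → a = 0 := by
    intro a ha hball
    have haI' : a ∈ I' := by
      refine lagClosed I' hI'dim hI' a ?_
      intro y hy
      rw [← hBKsup] at hy
      obtain ⟨b, hb, κ, hκ, rfl⟩ := Submodule.mem_sup.mp hy
      rw [map_add]
      have h2 : B a κ = 0 := hI a (hAI ha) κ (hKI hκ)
      rw [hball b hb, h2, add_zero]
    have h1 : a ∈ A ⊓ K := ⟨ha, ⟨hAI ha, haI'⟩⟩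
    rw [hAK] at h1
    exact h1
  obtain ⟨C, hCle, hCiso, hCdim, hCA, hCB⟩ :=
    aux_exists_graph B halt A B'
      (fun x hx y hy => hI x (hAI hx) y (hAI hy))
      (fun x hx y hy => hI' x (hBI' hx) y (hBI' hy))
      hABbot sepR (by omega)
  set U := A ⊔ B' with hUdef
  set W := LinearMap.BilinForm.orthogonal B U with hWdef
  have hmemW : ∀ x : V, x ∈ W ↔ ∀ n ∈ U, B n x = 0 := fun x => Iff.rfl
  have hUdim := Submodule.finrank_sup_add_finrank_inf_eq A B'
  rw [hABbot, finrank_bot, ← hUdef] at hUdim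
  have hUWbot : U ⊓ W = ⊥ := by
    rw [eq_bot_iff]
    rintro x ⟨hxU, hxW⟩
    replace hxW : ∀ n ∈ U, B n x = 0 := (hmemW x).mp hxW
    obtain ⟨a, ha, b, hb, rfl⟩ := Submodule.mem_sup.mp hxU
    have hb0 : b = 0 := by
      refine sepR b hb ?_
      intro a' ha'
      have h1 : B a' (a + b) = 0 := hxW a' (Submodule.mem_sup_left ha')
      have h2 : B a' a = 0 := hI a' (hAI ha') a (hAI ha)
      rw [map_add, h2] at h1
      linarith
    subst hb0
    simp only [add_zero] at hxW ⊢
    refine Submodule.mem_bot ℚ |>.mpr (sepL a ha ?_)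
    intro b' hb'
    have h1 : B b' a = 0 := hxW b' (Submodule.mem_sup_right hb')
    have := halt.neg b' a
    linarith
  have hKW : K ≤ W := by
    intro κ hκ
    refine (hmemW κ).mpr ?_
    intro n hn
    obtain ⟨a, ha, b, hb, rfl⟩ := Submodule.mem_sup.mp hn
    rw [map_add, LinearMap.add_apply]
    have h1 : B a κ = 0 := hI a (hAI ha) κ (hKI hκ)
    have h2 : B b κ = 0 := hI' b (hBI' hb) κ (hKI' hκ)
    rw [h1, h2, add_zero]
  have hWdim : finrank ℚ W = 2 * finrank ℚ K := by
    rw [hWdef, LinearMap.BilinForm.finrank_orthogonal (B := B) hndB U, hdim]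
    omega
  have hUWtop : U ⊔ W = ⊤ := by
    apply Submodule.eq_top_of_finrank_eq
    have h := Submodule.finrank_sup_add_finrank_inf_eq U W
    rw [hUWbot, finrank_bot] at h
    rw [hdim]
    omega
  have sepW : ∀ x ∈ W, (∀ y ∈ W, B x y = 0) → x = 0 := by
    intro x hxW hxall
    refine hnd.1 x ?_
    intro y
    have hy : y ∈ U ⊔ W := by rw [hUWtop]; exact Submodule.mem_top
    obtain ⟨u, hu, w, hw, rfl⟩ := Submodule.mem_sup.mp hy
    rw [map_add]
    have h1 : B u x = 0 := (hmemW x).mp hxW u hu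
    have h1' : B x u = 0 := by have := halt.neg u x; linarith
    rw [h1', hxall w hw, add_zero]
  obtain ⟨K', hK'W, hK'iso, hK'dim, hK'K⟩ :=
    aux_exists_lag_compl B halt W K hKW
      (fun x hx y hy => hI x (hKI hx) y (hKI hy))
      sepW hWdim
  refine ⟨C ⊔ K', ?_, ?_, ?_, ?_⟩
  · intro x hx y hy
    obtain ⟨c, hc, w, hw, rfl⟩ := Submodule.mem_sup.mp hx
    obtain ⟨c', hc', w', hw', rfl⟩ := Submodule.mem_sup.mp hy
    have hcU : c ∈ U := hCle hc
    have hcU' : c' ∈ U := hCle hc'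
    have t1 : B c c' = 0 := hCiso c hc c' hc'
    have t2 : B c w' = 0 := by
      have h1 : B c w' = 0 := by
        have := (hmemW w').mp (hK'W hw') c hcU
        exact this
      exact h1
    have t3 : B w c' = 0 := by
      have h1 : B c' w = 0 := (hmemW w).mp (hK'W hw) c' hcU'
      have := halt.neg c' w
      linarith
    have t4 : B w w' = 0 := hK'iso w hw w' hw'
    simp only [map_add, LinearMap.add_apply]
    rw [t1, t2, t3, t4]
    ring
  · have hCK'bot : C ⊓ K' = ⊥ := by
      rw [eq_bot_iff]
      rintro x ⟨hx1, hx2⟩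
      have : x ∈ U ⊓ W := ⟨hCle hx1, hK'W hx2⟩
      rw [hUWbot] at this
      exact this
    have h := Submodule.finrank_sup_add_finrank_inf_eq C K'
    rw [hCK'bot, finrank_bot] at h
    omega
  · rw [eq_bot_iff]
    rintro x ⟨hx1, hx2⟩
    obtain ⟨c, hc, w, hw, rfl⟩ := Submodule.mem_sup.mp hx1
    rw [← hAKsup] at hx2
    obtain ⟨a, ha, κ, hκ, heq⟩ := Submodule.mem_sup.mp hx2
    have hsub : c - a = κ - w := by
      rw [sub_eq_sub_iff_add_eq_add, ← heq]; abel
    have hUmem : c - a ∈ U := sub_mem (hCle hc) (Submodule.mem_sup_left ha)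
    have hWmem : κ - w ∈ W := sub_mem (hKW hκ) (hK'W hw)
    have hbot : c - a ∈ U ⊓ W := ⟨hUmem, hsub ▸ hWmem⟩
    rw [hUWbot, Submodule.mem_bot, sub_eq_zero] at hbot
    have hc0 : c = 0 := by
      have : c ∈ C ⊓ A := ⟨hc, hbot ▸ ha⟩
      rwa [hCA, Submodule.mem_bot] at this
    have hw0 : w = 0 := by
      have h1 : κ - w = 0 := by rw [← hsub, hbot, sub_self]
      have h2 : w = κ := (sub_eq_zero.mp h1).symm
      have : w ∈ K' ⊓ K := ⟨hw, h2 ▸ hκ⟩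
      rwa [hK'K, Submodule.mem_bot] at this
    rw [hc0, hw0, add_zero, Submodule.mem_bot]
  · rw [eq_bot_iff]
    rintro x ⟨hx1, hx2⟩
    obtain ⟨c, hc, w, hw, rfl⟩ := Submodule.mem_sup.mp hx1
    rw [← hBKsup] at hx2
    obtain ⟨b, hb, κ, hκ, heq⟩ := Submodule.mem_sup.mp hx2
    have hsub : c - b = κ - w := by
      rw [sub_eq_sub_iff_add_eq_add, ← heq]; abel
    have hUmem : c - b ∈ U := sub_mem (hCle hc) (Submodule.mem_sup_right hb)
    have hWmem : κ - w ∈ W := sub_mem (hKW hκ) (hK'W hw)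
    have hbot : c - b ∈ U ⊓ W := ⟨hUmem, hsub ▸ hWmem⟩
    rw [hUWbot, Submodule.mem_bot, sub_eq_zero] at hbot
    have hc0 : c = 0 := by
      have : c ∈ C ⊓ B' := ⟨hc, hbot ▸ hb⟩
      rwa [hCB, Submodule.mem_bot] at this
    have hw0 : w = 0 := by
      have h1 : κ - w = 0 := by rw [← hsub, hbot, sub_self]
      have h2 : w = κ := (sub_eq_zero.mp h1).symm
      have : w ∈ K' ⊓ K := ⟨hw, h2 ▸ hκ⟩
      rwa [hK'K, Submodule.mem_bot] at this
    rw [hc0, hw0, add_zero, Submodule.mem_bot]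
end

section
/- Let G be an abelian group and A, B subgroups of G such that A, B and A ∩ B are all divisible. Then the torsion subgroup of A + B equals the sum of the torsion subgroups of A and B: (A + B)_tor = A_tor + B_tor. -/
/-- If `A`, `B` and `A ∩ B` are divisible subgroups of an abelian group `G`,
then the torsion subgroup of `A + B` is the sum of the torsion subgroups of `A` and `B`. -/
theorem torsion_of_sum_of_divisible_subgroups
    {G : Type*} [AddCommGroup G] (A B : AddSubgroup G)
    (hA : ∀ x ∈ A, ∀ n : ℕ, 0 < n → ∃ y ∈ A, n • y = x)
    (hB : ∀ x ∈ B, ∀ n : ℕ, 0 < n → ∃ y ∈ B, n • y = x)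
    (hAB : ∀ x ∈ A ⊓ B, ∀ n : ℕ, 0 < n → ∃ y ∈ A ⊓ B, n • y = x) :
    {x : G | x ∈ A ⊔ B ∧ IsOfFinAddOrder x} =
      {x : G | ∃ a ∈ A, ∃ b ∈ B,
        IsOfFinAddOrder a ∧ IsOfFinAddOrder b ∧ x = a + b} := by
  ext x
  simp only [Set.mem_setOf_eq]
  constructor
  · rintro ⟨hx, hfin⟩
    obtain ⟨a, ha, b, hb, rfl⟩ := (AddSubgroup.mem_sup).1 hx
    obtain ⟨n, hn, hn0⟩ := isOfFinAddOrder_iff_nsmul_eq_zero.1 hfin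
    have hna : n • a ∈ A ⊓ B := by
      constructor
      · exact AddSubgroup.nsmul_mem A ha n
      · have : n • a = -(n • b) := by
          have := hn0
          rw [smul_add] at this
          linear_combination (norm := abel_nf) this
        rw [this]
        exact AddSubgroup.neg_mem B (AddSubgroup.nsmul_mem B hb n)
    obtain ⟨c, hc, hnc⟩ := hAB _ hna n hn
    refine ⟨a - c, A.sub_mem ha hc.1, b + c, B.add_mem hb hc.2, ?_, ?_, by abel⟩
    · refine isOfFinAddOrder_iff_nsmul_eq_zero.2 ⟨n, hn, ?_⟩
      rw [smul_sub, hnc, sub_self]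
    · refine isOfFinAddOrder_iff_nsmul_eq_zero.2 ⟨n, hn, ?_⟩
      rw [smul_add, hnc]
      rw [smul_add] at hn0
      linear_combination (norm := abel_nf) hn0
  · rintro ⟨a, ha, b, hb, hfa, hfb, rfl⟩
    exact ⟨AddSubgroup.add_mem_sup ha hb, hfa.add hfb⟩
end

section
/- Let (V, b) be a nondegenerate symmetric bilinear space over ℚ of Witt index at least 2, and let v, w be nonzero isotropic vectors. Then there exists a subspace W ⊆ V with v, w ∈ W, dim W ≤ 5, such that the restriction of b to W is nondegenerate and W contains two isotropic vectors with nonzero pairing. -/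
open Module Submodule

private lemma aux_finrank_sup_le {V : Type*} [AddCommGroup V] [Module ℚ V]
    [FiniteDimensional ℚ V] (s t : Submodule ℚ V) :
    finrank ℚ ↥(s ⊔ t) ≤ finrank ℚ s + finrank ℚ t := by
  have h := Submodule.finrank_sup_add_finrank_inf_eq s t
  omega

/-- Given an isotropic `z` and `u` with `B z u ≠ 0`, produce an isotropic partner. -/
private lemma aux_fsl {V : Type*} [AddCommGroup V] [Module ℚ V] (z : V) :
    finrank ℚ ↥(span ℚ ({z} : Set V)) ≤ 1 := by
  rcases eq_or_ne z 0 with rfl | h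
  · rw [span_zero_singleton]; simp
  · rw [finrank_span_singleton h]

/-- Given an isotropic `z` and `u` with `B z u ≠ 0`, produce an isotropic partner. -/
private lemma aux_partner {V : Type*} [AddCommGroup V] [Module ℚ V]
    (B : V →ₗ[ℚ] V →ₗ[ℚ] ℚ) (hsymm : ∀ x y, B x y = B y x)
    {z u : V} (hz : B z z = 0) (hu : B z u ≠ 0) :
    ∃ u', u' ∈ span ℚ {z, u} ∧ B z u' = 1 ∧ B u' u' = 0 := by
  set c : ℚ := (B z u)⁻¹
  set u₁ : V := c • u with hu₁
  have hzu₁ : B z u₁ = 1 := by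
    simp [hu₁, c, map_smul, inv_mul_cancel₀ hu]
  refine ⟨u₁ - (B u₁ u₁ / 2) • z, ?_, ?_, ?_⟩
  · apply sub_mem
    · exact smul_mem _ _ (subset_span (by simp))
    · exact smul_mem _ _ (subset_span (by simp))
  · simp [map_sub, map_smul, hzu₁, hz]
  · have hu₁z : B u₁ z = 1 := by rw [hsymm]; exact hzu₁
    simp only [map_sub, map_smul, LinearMap.sub_apply, LinearMap.smul_apply,
      smul_eq_mul, hzu₁, hu₁z, hz]
    ring

/-- Any element of a subspace on which `B` is nondegenerate lies in a subspace of
dimension at most `2` on which `B` is nondegenerate. -/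
private lemma aux_small {V : Type*} [AddCommGroup V] [Module ℚ V] [FiniteDimensional ℚ V]
    (B : V →ₗ[ℚ] V →ₗ[ℚ] ℚ) (hsymm : ∀ x y, B x y = B y x)
    (U : Submodule ℚ V) (hU : ∀ x ∈ U, (∀ y ∈ U, B x y = 0) → x = 0)
    (z : V) (hz : z ∈ U) :
    ∃ W₂ : Submodule ℚ V, W₂ ≤ U ∧ z ∈ W₂ ∧ finrank ℚ W₂ ≤ 2 ∧
      ∀ x ∈ W₂, (∀ y ∈ W₂, B x y = 0) → x = 0 := by
  by_cases hzz : B z z ≠ 0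
  · refine ⟨span ℚ {z}, by rwa [span_singleton_le_iff_mem], mem_span_singleton_self z, ?_, ?_⟩
    · calc finrank ℚ ↥(span ℚ ({z} : Set V)) ≤ 1 := aux_fsl z
        _ ≤ 2 := by norm_num
    · intro x hx h
      obtain ⟨a, rfl⟩ := mem_span_singleton.1 hx
      have := h z (mem_span_singleton_self z)
      simp only [map_smul, LinearMap.smul_apply, smul_eq_mul] at this
      rcases mul_eq_zero.1 this with h1 | h1
      · simp [h1]
      · exact absurd h1 hzz
  · push_neg at hzz
    by_cases hz0 : z = 0
    · refine ⟨⊥, bot_le, by simp [hz0], by simp, ?_⟩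
      intro x hx _
      simpa using hx
    · -- z is a nonzero isotropic vector of U; find a partner in U
      have : ¬ ∀ y ∈ U, B z y = 0 := fun h => hz0 (hU z hz h)
      push_neg at this
      obtain ⟨u, huU, hu⟩ := this
      obtain ⟨u', hu'mem, hzu', hu'iso⟩ := aux_partner B hsymm hzz hu
      have hspanle : span ℚ ({z, u} : Set V) ≤ U := by
        rw [span_le]; rintro x (rfl | rfl); exacts [hz, huU]
      have hu'U : u' ∈ U := hspanle hu'mem
      refine ⟨span ℚ {z, u'}, ?_, subset_span (by simp), ?_, ?_⟩
      · rw [span_le]; rintro x (rfl | rfl); exacts [hz, hu'U]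
      · rw [show ({z, u'} : Set V) = insert z {u'} from rfl, span_insert]
        calc finrank ℚ ↥(span ℚ {z} ⊔ span ℚ ({u'} : Set V))
            ≤ finrank ℚ ↥(span ℚ ({z} : Set V)) + finrank ℚ ↥(span ℚ ({u'} : Set V)) :=
              aux_finrank_sup_le _ _
          _ ≤ 1 + 1 := add_le_add (aux_fsl z) (aux_fsl u')
          _ = 2 := rfl
      · intro x hx h
        obtain ⟨a, b, rfl⟩ := mem_span_pair.1 hx
        have hu'z : B u' z = 1 := by rw [hsymm]; exact hzu'
        have h1 := h z (subset_span (by simp))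
        have h2 := h u' (subset_span (by simp))
        simp only [map_add, map_smul, LinearMap.add_apply, LinearMap.smul_apply,
          smul_eq_mul, hzz, hzu', hu'z, hu'iso, mul_zero, mul_one, zero_add, add_zero] at h1 h2
        simp [h1, h2]

/-- In a nondegenerate symmetric bilinear space over `ℚ` of Witt index at
least 2, any two nonzero isotropic vectors `v, w` are contained in a nondegenerate subspace
`W` of dimension at most 5 containing two isotropic vectors with nonzero pairing. -/
theorem isotropic_vectors_in_small_nondegenerate_subspace
    (V : Type*) [AddCommGroup V] [Module ℚ V] [FiniteDimensional ℚ V]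
    (B : V →ₗ[ℚ] V →ₗ[ℚ] ℚ) (hsymm : ∀ x y, B x y = B y x) (hnd : B.Nondegenerate)
    -- Witt index at least 2: there is a 2-dimensional totally isotropic subspace
    (hwitt : ∃ W₀ : Submodule ℚ V, finrank ℚ W₀ = 2 ∧ ∀ x ∈ W₀, ∀ y ∈ W₀, B x y = 0)
    (v w : V) (hv : v ≠ 0) (hw : w ≠ 0) (hviso : B v v = 0) (hwiso : B w w = 0) :
    ∃ W : Submodule ℚ V, v ∈ W ∧ w ∈ W ∧ finrank ℚ W ≤ 5 ∧
      (∀ x ∈ W, (∀ y ∈ W, B x y = 0) → x = 0) ∧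
      ∃ e ∈ W, ∃ f ∈ W, B e e = 0 ∧ B f f = 0 ∧ B e f ≠ 0 := by
  have hrefl : B.IsRefl := fun x y h => by rw [hsymm]; exact h
  -- find a hyperbolic partner for v
  have hex : ¬ ∀ y, B v y = 0 := fun h => hv (hnd.1 v h)
  push_neg at hex
  obtain ⟨u, hu⟩ := hex
  obtain ⟨v', _, hvv', hv'iso⟩ := aux_partner B hsymm hviso hu
  have hv'v : B v' v = 1 := by rw [hsymm]; exact hvv'
  set H : Submodule ℚ V := span ℚ {v, v'} with hH
  have hvH : v ∈ H := subset_span (by simp)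
  have hv'H : v' ∈ H := subset_span (by simp)
  -- nondegeneracy of H, elementwise
  have hHnd : ∀ x ∈ H, (∀ y ∈ H, B x y = 0) → x = 0 := by
    intro x hx h
    obtain ⟨a, b, rfl⟩ := mem_span_pair.1 hx
    have h1 := h v hvH
    have h2 := h v' hv'H
    simp only [map_add, map_smul, LinearMap.add_apply, LinearMap.smul_apply,
      smul_eq_mul, hviso, hvv', hv'v, hv'iso, mul_zero, mul_one, zero_add, add_zero] at h1 h2
    simp [h1, h2]
  have hHres : (LinearMap.BilinForm.restrict B H).Nondegenerate := by
    refine ⟨?_, ?_⟩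
    · rintro ⟨x, hx⟩ h
      have : x = 0 := hHnd x hx fun y hy => h ⟨y, hy⟩
      exact Subtype.ext this
    · rintro ⟨x, hx⟩ h
      have : x = 0 := hHnd x hx fun y hy => by rw [hsymm]; exact h ⟨y, hy⟩
      exact Subtype.ext this
  have hcompl : IsCompl H (LinearMap.BilinForm.orthogonal B H) :=
    LinearMap.BilinForm.isCompl_orthogonal_of_restrict_nondegenerate hrefl hHres
  set U : Submodule ℚ V := LinearMap.BilinForm.orthogonal B H with hUdef
  have hsup : H ⊔ U = ⊤ := hcompl.sup_eq_top
  -- orthogonality facts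
  have hUorth : ∀ x ∈ U, ∀ n ∈ H, B n x = 0 := by
    intro x hx n hn
    exact LinearMap.BilinForm.mem_orthogonal_iff.1 hx n hn
  -- nondegeneracy of U, elementwise
  have hUnd : ∀ x ∈ U, (∀ y ∈ U, B x y = 0) → x = 0 := by
    intro x hxU hx
    apply hnd.1
    intro m
    have hm : m ∈ H ⊔ U := by rw [hsup]; trivial
    obtain ⟨h₁, hh₁, u₁, hu₁, rfl⟩ := mem_sup.1 hm
    have e1 : B x h₁ = 0 := hrefl _ _ (hUorth x hxU h₁ hh₁)
    rw [map_add, e1, hx u₁ hu₁, add_zero]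
  -- decompose w
  have hwmem : w ∈ H ⊔ U := by rw [hsup]; trivial
  obtain ⟨w₁, hw₁, w₂, hw₂, hweq⟩ := mem_sup.1 hwmem
  obtain ⟨W₂, hW₂le, hw₂W₂, hW₂fr, hW₂nd⟩ := aux_small B hsymm U hUnd w₂ hw₂
  refine ⟨H ⊔ W₂, mem_sup_left hvH, ?_, ?_, ?_, v, mem_sup_left hvH, v',
    mem_sup_left hv'H, hviso, hv'iso, by rw [hvv']; norm_num⟩
  · rw [← hweq]; exact add_mem (mem_sup_left hw₁) (mem_sup_right hw₂W₂)
  · calc finrank ℚ ↥(H ⊔ W₂) ≤ finrank ℚ H + finrank ℚ W₂ := aux_finrank_sup_le _ _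
      _ ≤ 2 + 2 := by
          refine add_le_add ?_ hW₂fr
          rw [hH, show ({v, v'} : Set V) = insert v {v'} from rfl, span_insert]
          calc finrank ℚ ↥(span ℚ {v} ⊔ span ℚ ({v'} : Set V))
              ≤ finrank ℚ ↥(span ℚ ({v} : Set V)) + finrank ℚ ↥(span ℚ ({v'} : Set V)) :=
                aux_finrank_sup_le _ _
            _ ≤ 1 + 1 := add_le_add (aux_fsl v)
                (aux_fsl v')
            _ = 2 := rfl
      _ ≤ 5 := by norm_num
  · intro x hx h
    obtain ⟨h₁, hh₁, u₁, hu₁, rfl⟩ := mem_sup.1 hx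
    have hu₁U : u₁ ∈ U := hW₂le hu₁
    have hu₁0 : u₁ = 0 := by
      apply hW₂nd u₁ hu₁
      intro y hy
      have hyU : y ∈ U := hW₂le hy
      have e1 : B h₁ y = 0 := hUorth y hyU h₁ hh₁
      have := h y (mem_sup_right hy)
      rw [map_add, LinearMap.add_apply, e1, zero_add] at this
      exact this
    rw [hu₁0, add_zero]
    apply hHnd h₁ hh₁
    intro y hy
    have := h y (mem_sup_left hy)
    rw [hu₁0, add_zero] at this
    exact this
end

section
/- Let G be an abelian group, let A₁, …, A_N be divisible subgroups of G such that all pairwise and iterated intersections of partial sums are divisible (it suffices to assume that A₁ + ⋯ + A_N is divisible and (A₁ + ⋯ + A_{i}) ∩ A_{i+1} is divisible for each i), and let a₁, …, a_N be torsion elements of G. Then the subgroup of G generated by the union of the sets (A_i)_tor + a_i (for i = 1, …, N) equals (A₁ + ⋯ + A_N)_tor + ⟨a₁, …, a_N⟩. -/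
open AddSubgroup

private lemma key_sup_torsion {G : Type*} [AddCommGroup G] (A B : AddSubgroup G)
    (hdiv : ∀ x ∈ A ⊓ B, ∀ n : ℕ, 0 < n → ∃ y ∈ A ⊓ B, n • y = x) :
    (A ⊔ B) ⊓ AddCommGroup.torsion G
      = (A ⊓ AddCommGroup.torsion G) ⊔ (B ⊓ AddCommGroup.torsion G) := by
  apply le_antisymm
  · rintro x ⟨hx, htor⟩
    have hx : x ∈ A ⊔ B := hx
    have htor : x ∈ AddCommGroup.torsion G := htor
    rw [AddSubgroup.mem_sup] at hx
    obtain ⟨u, hu, v, hv, rfl⟩ := hx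
    obtain ⟨n, hn, hnx⟩ := (isOfFinAddOrder_iff_nsmul_eq_zero).1 htor
    have huv : n • u ∈ A ⊓ B := by
      constructor
      · exact A.nsmul_mem hu n
      · have : n • u = -(n • v) := by
          have := hnx
          rw [smul_add] at this
          linear_combination (norm := abel) this
        rw [this]
        exact B.neg_mem (B.nsmul_mem hv n)
    obtain ⟨w, hw, hnw⟩ := hdiv _ huv n hn
    have h1 : u - w ∈ A ⊓ AddCommGroup.torsion G := by
      refine ⟨A.sub_mem hu hw.1, ?_⟩
      show IsOfFinAddOrder _
      rw [isOfFinAddOrder_iff_nsmul_eq_zero]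
      exact ⟨n, hn, by rw [smul_sub, hnw, sub_self]⟩
    have h2 : w + v ∈ B ⊓ AddCommGroup.torsion G := by
      refine ⟨B.add_mem hw.2 hv, ?_⟩
      show IsOfFinAddOrder _
      rw [isOfFinAddOrder_iff_nsmul_eq_zero]
      refine ⟨n, hn, ?_⟩
      rw [smul_add, hnw]
      rw [smul_add] at hnx
      exact hnx
    have : u + v = (u - w) + (w + v) := by abel
    rw [this, AddSubgroup.mem_sup]
    exact ⟨_, h1, _, h2, rfl⟩
  · refine sup_le (inf_le_inf_right _ le_sup_left) (inf_le_inf_right _ le_sup_right)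

/-- Let `A₁, …, A_N` be divisible subgroups of an abelian group `G` such that
the sum `A₁ + ⋯ + A_N` and each intersection `(A₁ + ⋯ + Aᵢ) ∩ A_{i+1}` are divisible, and
let `a₁, …, a_N` be torsion elements of `G`. Then the subgroup generated by the union of the
translated torsion sets `(Aᵢ)_tor + aᵢ` equals `(A₁ + ⋯ + A_N)_tor + ⟨a₁, …, a_N⟩`. -/
theorem subgroup_generated_by_translated_torsion_parts
    {G : Type*} [AddCommGroup G] (N : ℕ) (A : Fin N → AddSubgroup G) (a : Fin N → G)
    (hdivA : ∀ i, ∀ x ∈ A i, ∀ n : ℕ, 0 < n → ∃ y ∈ A i, n • y = x)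
    (hdivSum : ∀ x ∈ ⨆ i, A i, ∀ n : ℕ, 0 < n → ∃ y ∈ ⨆ i, A i, n • y = x)
    (hdivInt : ∀ i : Fin N, ∀ x ∈ (⨆ j : Fin N, ⨆ _ : j < i, A j) ⊓ A i,
      ∀ n : ℕ, 0 < n → ∃ y ∈ (⨆ j : Fin N, ⨆ _ : j < i, A j) ⊓ A i, n • y = x)
    (ha : ∀ i, IsOfFinAddOrder (a i)) :
    ∀ x : G,
      x ∈ AddSubgroup.closure
            (⋃ i : Fin N, (fun t => t + a i) '' {t : G | t ∈ A i ∧ IsOfFinAddOrder t}) ↔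
        ∃ t : G, (t ∈ ⨆ i, A i) ∧ IsOfFinAddOrder t ∧
          ∃ c ∈ AddSubgroup.closure (Set.range a), x = t + c := by
  -- prefix sums
  set T := AddCommGroup.torsion G with hT
  set S : ℕ → AddSubgroup G := fun i => ⨆ j : Fin N, ⨆ _ : (j : ℕ) < i, A j with hS
  set TS : ℕ → AddSubgroup G := fun i => ⨆ j : Fin N, ⨆ _ : (j : ℕ) < i, (A j ⊓ T) with hTS
  have hS0 : S 0 = ⊥ := by
    simp [hS]
  have hTS0 : TS 0 = ⊥ := by
    simp [hTS]
  have hSsucc : ∀ i (hi : i < N), S (i + 1) = S i ⊔ A ⟨i, hi⟩ := by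
    intro i hi
    apply le_antisymm
    · refine iSup_le fun j => iSup_le fun hj => ?_
      rcases lt_or_eq_of_le (Nat.lt_succ_iff.1 hj) with h | h
      · exact le_sup_of_le_left (le_iSup_of_le j (le_iSup_of_le h le_rfl))
      · have : j = ⟨i, hi⟩ := Fin.ext h
        rw [this]; exact le_sup_right
    · refine sup_le (iSup_le fun j => iSup_le fun hj =>
        le_iSup_of_le j (le_iSup_of_le (Nat.lt_succ_of_lt hj) le_rfl)) ?_
      exact le_iSup_of_le ⟨i, hi⟩ (le_iSup_of_le (Nat.lt_succ_self i) le_rfl)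
  have hTSsucc : ∀ i (hi : i < N), TS (i + 1) = TS i ⊔ (A ⟨i, hi⟩ ⊓ T) := by
    intro i hi
    apply le_antisymm
    · refine iSup_le fun j => iSup_le fun hj => ?_
      rcases lt_or_eq_of_le (Nat.lt_succ_iff.1 hj) with h | h
      · exact le_sup_of_le_left (le_iSup_of_le j (le_iSup_of_le h le_rfl))
      · have : j = ⟨i, hi⟩ := Fin.ext h
        rw [this]; exact le_sup_right
    · refine sup_le (iSup_le fun j => iSup_le fun hj =>
        le_iSup_of_le j (le_iSup_of_le (Nat.lt_succ_of_lt hj) le_rfl)) ?_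
      exact le_iSup_of_le ⟨i, hi⟩ (le_iSup_of_le (Nat.lt_succ_self i) le_rfl)
  have hind : ∀ i, i ≤ N → S i ⊓ T = TS i := by
    intro i
    induction i with
    | zero => intro _; rw [hS0, hTS0, bot_inf_eq]
    | succ i ih =>
      intro hi
      have hi' : i < N := hi
      have hSi : (⨆ j : Fin N, ⨆ _ : j < (⟨i, hi'⟩ : Fin N), A j) = S i := by
        simp only [hS, Fin.lt_def]
      rw [hSsucc i hi', hTSsucc i hi',
        key_sup_torsion _ _ (by rw [← hSi]; exact hdivInt ⟨i, hi'⟩),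
        ih (le_of_lt hi')]
  have hSN : S N = ⨆ i, A i := by
    apply le_antisymm (iSup_le fun j => iSup_le fun _ => le_iSup A j)
    exact iSup_le fun j => le_iSup_of_le j (le_iSup_of_le j.isLt le_rfl)
  have hTSN : TS N = ⨆ i, (A i ⊓ T) := by
    apply le_antisymm (iSup_le fun j => iSup_le fun _ => le_iSup _ j)
    exact iSup_le fun j => le_iSup_of_le j (le_iSup_of_le j.isLt le_rfl)
  have hmain : (⨆ i, A i) ⊓ T = ⨆ i, (A i ⊓ T) := by
    rw [← hSN, ← hTSN, hind N le_rfl]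
  -- closure equals the sup
  have hclosure : AddSubgroup.closure
      (⋃ i : Fin N, (fun t => t + a i) '' {t : G | t ∈ A i ∧ IsOfFinAddOrder t})
      = (⨆ i, (A i ⊓ T)) ⊔ AddSubgroup.closure (Set.range a) := by
    apply le_antisymm
    · rw [AddSubgroup.closure_le]
      rintro x hx
      simp only [Set.mem_iUnion, Set.mem_image, Set.mem_setOf_eq] at hx
      obtain ⟨i, t, ⟨htA, htor⟩, rfl⟩ := hx
      rw [SetLike.mem_coe, AddSubgroup.mem_sup]
      exact ⟨t, le_iSup (fun i => A i ⊓ T) i ⟨htA, htor⟩, a i,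
        AddSubgroup.subset_closure ⟨i, rfl⟩, rfl⟩
    · have hz : ∀ i : Fin N, a i ∈ AddSubgroup.closure
          (⋃ i : Fin N, (fun t => t + a i) '' {t : G | t ∈ A i ∧ IsOfFinAddOrder t}) := by
        intro i
        apply AddSubgroup.subset_closure
        refine Set.mem_iUnion.2 ⟨i, ⟨0, ⟨(A i).zero_mem, IsOfFinAddOrder.zero⟩, by simp⟩⟩
      refine sup_le (iSup_le fun i => ?_) ?_
      · rintro t ⟨htA, htor⟩
        have h1 : t + a i ∈ AddSubgroup.closure
            (⋃ i : Fin N, (fun t => t + a i) '' {t : G | t ∈ A i ∧ IsOfFinAddOrder t}) :=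
          AddSubgroup.subset_closure (Set.mem_iUnion.2 ⟨i, ⟨t, ⟨htA, htor⟩, rfl⟩⟩)
        have := AddSubgroup.sub_mem _ h1 (hz i)
        simpa using this
      · rw [AddSubgroup.closure_le]
        rintro x ⟨i, rfl⟩
        exact hz i
  intro x
  rw [hclosure, ← hmain, AddSubgroup.mem_sup]
  constructor
  · rintro ⟨t, ⟨htA, htor⟩, c, hc, rfl⟩
    exact ⟨t, htA, htor, c, hc, rfl⟩
  · rintro ⟨t, htA, htor, c, hc, rfl⟩
    exact ⟨t, ⟨htA, htor⟩, c, hc, rfl⟩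
end
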